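/- Let η∈ℝ, let β(−η)=√(1−iη) (principal branch of the complex square root), and let φ(x)=2·sech²(x). Define k:ℝ→ℂ by k(x)=d/dx(e^{β(−η)x}·sech x). Then k satisfies the fourth-order ODE k''''(x)−4k''(x)+6·d/dx(φ(x)k'(x))−3η²k(x)=−4iηβ(−η)·k'(x) for all x∈ℝ. (Equivalently, g*(x,η)=k(x) is an eigenfunction of the adjoint linearized KP-II operator L(η)*=∂_x³−4∂_x−3η²∂_x^{-1}+6φ∂_x with eigenvalue λ(−η)=−4iηβ(−η).) -/

import Mathlib

open MeasureTheory Filter Complex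
open scoped ENNReal Topology

noncomputable section

/-- partial derivative in the first variable -/
def pdX (f : ℝ → ℝ → ℝ) (x y : ℝ) : ℝ := deriv (fun x' => f x' y) x

/-- partial derivative in the second variable -/
def pdY (f : ℝ → ℝ → ℝ) (x y : ℝ) : ℝ := deriv (fun y' => f x y') y

/-- the L² norm on ℝ² -/
def L2n (f : ℝ → ℝ → ℝ) : ℝ≥0∞ := eLpNorm (fun p : ℝ × ℝ => f p.1 p.2) 2 volume

/-- the KP-II line soliton profile φ_c(x) = c sech²(√(c/2) x) -/
def soliton (c x : ℝ) : ℝ := c * ((Real.cosh (Real.sqrt (c/2) * x))⁻¹) ^ 2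

def Smooth2 (f : ℝ → ℝ → ℝ) : Prop := ContDiff ℝ (⊤ : ℕ∞) fun p : ℝ × ℝ => f p.1 p.2

def Smooth3 (u : ℝ → ℝ → ℝ → ℝ) : Prop :=
  ContDiff ℝ (⊤ : ℕ∞) fun p : ℝ × ℝ × ℝ => u p.1 p.2.1 p.2.2

/-- decay faster than any polynomial -/
def RapidDecay2 (f : ℝ → ℝ → ℝ) : Prop :=
  ∀ n : ℕ, ∃ C : ℝ, ∀ x y : ℝ, (1 + x ^ 2 + y ^ 2) ^ n * |f x y| ≤ C

def RapidDecay3 (u : ℝ → ℝ → ℝ → ℝ) : Prop := ∀ t : ℝ, RapidDecay2 (u t)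

/-- exponential decay of every order -/
def ExpDecay2 (f : ℝ → ℝ → ℝ) : Prop :=
  ∀ n : ℕ, ∃ C : ℝ, ∀ x y : ℝ, |f x y| ≤ C * Real.exp (-(n : ℝ) * (|x| + |y|))

/-- u solves the KP-II equation ∂_x(∂_t u+∂_x³u+3∂_x(u²))+3∂_y²u=0 for t>0 -/
def IsKPII (u : ℝ → ℝ → ℝ → ℝ) : Prop :=
  ∀ t x y : ℝ, 0 < t →
    pdX (fun a b => deriv (fun t' => u t' a b) t
        + pdX (pdX (pdX (u t))) a b
        + 3 * pdX (fun a' b' => (u t a' b') ^ 2) a b) x y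
      + 3 * pdY (pdY (u t)) x y = 0

/-- u solves KP-II on the time interval (0,T] -/
def IsKPIIOn (T : ℝ) (u : ℝ → ℝ → ℝ → ℝ) : Prop :=
  ∀ t x y : ℝ, 0 < t → t ≤ T →
    pdX (fun a b => deriv (fun t' => u t' a b) t
        + pdX (pdX (pdX (u t))) a b
        + 3 * pdX (fun a' b' => (u t a' b') ^ 2) a b) x y
      + 3 * pdY (pdY (u t)) x y = 0

/-- w solves the free linearized KP-II equation in the moving frame:
∂_x(∂_t w+∂_x³w−4∂_x w)+3∂_y²w=0 -/
def IsFreeLin (w : ℝ → ℝ → ℝ → ℝ) : Prop :=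
  ∀ t x y : ℝ, 0 < t →
    pdX (fun a b => deriv (fun t' => w t' a b) t
        + pdX (pdX (pdX (w t))) a b - 4 * pdX (w t) a b) x y
      + 3 * pdY (pdY (w t)) x y = 0

/-- u solves the KP-II equation linearized around the line soliton φ = soliton 2:
∂_x(∂_t u+∂_x³u−4∂_x u+6∂_x(φu))+3∂_y²u=0 -/
def IsLinSol (u : ℝ → ℝ → ℝ → ℝ) : Prop :=
  ∀ t x y : ℝ, 0 < t →
    pdX (fun a b => deriv (fun t' => u t' a b) t
        + pdX (pdX (pdX (u t))) a b - 4 * pdX (u t) a b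
        + 6 * pdX (fun a' b' => soliton 2 a' * u t a' b') a b) x y
      + 3 * pdY (pdY (u t)) x y = 0

/-- Fourier transform on ℝ² -/
def FT2 (f : ℝ → ℝ → ℝ) (ξ η : ℝ) : ℂ :=
  ∫ p : ℝ × ℝ, Complex.exp (-Complex.I * ((p.1 * ξ + p.2 * η : ℝ) : ℂ)) * ((f p.1 p.2 : ℝ) : ℂ)

/-- the norm ‖ |D_x|^a |D_y|^b f ‖_{L²(ℝ²)} computed on the Fourier side -/
def fwNorm (a b : ℝ) (f : ℝ → ℝ → ℝ) : ℝ≥0∞ :=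
  (∫⁻ q : ℝ × ℝ,
      ENNReal.ofReal (|q.1| ^ (2*a) * |q.2| ^ (2*b) * ‖FT2 f q.1 q.2‖ ^ 2)) ^ (1/2 : ℝ)

/-- the Sobolev H^s(ℝ²) norm computed on the Fourier side -/
def sobNorm (s : ℝ) (f : ℝ → ℝ → ℝ) : ℝ≥0∞ :=
  (∫⁻ q : ℝ × ℝ,
      ENNReal.ofReal ((1 + q.1 ^ 2 + q.2 ^ 2) ^ s * ‖FT2 f q.1 q.2‖ ^ 2)) ^ (1/2 : ℝ)

/-- the Sobolev H^k(ℝ) norm of a smooth function of one variable -/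
def HkNormS (k : ℕ) (f : ℝ → ℝ) : ℝ≥0∞ :=
  ∑ j ∈ Finset.range (k+1), eLpNorm (iteratedDeriv j f) 2 volume

/-- the exponentially weighted norm ‖e^{αx} f‖_{L²(ℝ²)} -/
def XnormE (α : ℝ) (f : ℝ → ℝ → ℝ) : ℝ≥0∞ :=
  eLpNorm (fun p : ℝ × ℝ => Real.exp (α * p.1) * f p.1 p.2) 2 volume

/-- the mixed norm ‖e^{αx} f‖_{L¹_x L²_y} -/
def XL1L2 (α : ℝ) (f : ℝ → ℝ → ℝ) : ℝ≥0∞ :=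
  ∫⁻ x : ℝ, (∫⁻ y : ℝ, ENNReal.ofReal ((Real.exp (α * x) * f x y) ^ 2)) ^ (1/2 : ℝ)

/-- the Japanese bracket ⟨x⟩ = √(1+x²) -/
def japW (x : ℝ) : ℝ := Real.sqrt (1 + x ^ 2)

/-- the weight p_n(x) = e^{2αn}(1+tanh(α(x−n))) -/
def pfun (α : ℝ) (n : ℕ) (x : ℝ) : ℝ :=
  Real.exp (2 * α * (n : ℝ)) * (1 + Real.tanh (α * (x - (n : ℝ))))

/-- χ_{+,ε}(x) = 1 + tanh(εx) -/
def chiP (ε x : ℝ) : ℝ := 1 + Real.tanh (ε * x)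

/-- β(η) = √(1+iη), principal branch -/
def betap (η : ℝ) : ℂ := (1 + (η : ℂ) * Complex.I) ^ ((1 : ℂ)/2)

/-- β(−η) = √(1−iη), principal branch -/
def betam (η : ℝ) : ℂ := (1 - (η : ℂ) * Complex.I) ^ ((1 : ℂ)/2)

/-- the adjoint resonant eigenfunction g^*(x,η)=∂_x(e^{β(−η)x} sech x) -/
def gstar (x η : ℝ) : ℂ :=
  deriv (fun x' : ℝ => Complex.exp (betam η * (x' : ℂ)) * (Complex.cosh (x' : ℂ))⁻¹) x

/-- g₁^*(x,η) = Re g^*(x,η) -/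
def g1s (x η : ℝ) : ℝ := (gstar x η).re

/-- g₂^*(x,η) = −η⁻¹ Im g^*(x,η), extended continuously at η = 0 -/
def g2s (x η : ℝ) : ℝ :=
  if η = 0 then -deriv (fun η' : ℝ => (gstar x η').im) 0 else -η⁻¹ * (gstar x η).im

/-- the rescaled adjoint eigenfunctions g₁^*(z,η,c)=c g₁^*(√(c/2)z,η),
g₂^*(z,η,c)=(c/2) g₂^*(√(c/2)z,η) -/
def gsc (k : Fin 2) (z η c : ℝ) : ℝ :=
  if k = 0 then c * g1s (Real.sqrt (c/2) * z) η else (c/2) * g2s (Real.sqrt (c/2) * z) η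

/-- the resonant eigenfunction g(x,η)=(−i/(2ηβ(η)))∂_x²(e^{−β(η)x} sech x) -/
def gres (x η : ℝ) : ℂ :=
  (-Complex.I / (2 * (η : ℂ) * betap η)) *
    iteratedDeriv 2 (fun x' : ℝ => Complex.exp (-(betap η) * (x' : ℂ)) * (Complex.cosh (x' : ℂ))⁻¹) x

/-- g₁(x,η) = 2 Re g(x,η) -/
def g1fun (x η : ℝ) : ℝ := 2 * (gres x η).re

/-- g₂(x,η) = −2η Im g(x,η) -/
def g2fun (x η : ℝ) : ℝ := -2 * η * (gres x η).im

/-- partial Fourier transform in y (no normalization) -/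
def FyF (f : ℝ → ℝ → ℝ) (x η : ℝ) : ℂ :=
  ∫ y : ℝ, ((f x y : ℝ) : ℂ) * Complex.exp (-Complex.I * (y : ℂ) * (η : ℂ))

/-- the coefficients a_k(η) = ∫∫ f(x,y)e^{−iyη} conj(g_k^*(x,η)) dx dy -/
def acoef (f : ℝ → ℝ → ℝ) (k : Fin 2) (η : ℝ) : ℂ :=
  ∫ x : ℝ, FyF f x η * (starRingEnd ℂ) (((if k = 0 then g1s x η else g2s x η : ℝ) : ℂ))

/-- spectral projection P₀(η₀) onto the resonant modes -/
def P0r (η₀ : ℝ) (f : ℝ → ℝ → ℝ) (x y : ℝ) : ℝ :=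
  (1 / (2 * Real.pi)) *
    (∫ η in Set.Icc (-η₀) η₀,
      (acoef f 0 η * ((g1fun x η : ℝ) : ℂ) + acoef f 1 η * ((g2fun x η : ℝ) : ℂ))
        * Complex.exp (Complex.I * (y : ℂ) * (η : ℂ))).re

/-- Fourier cutoff P₁(0,M) to y-frequencies |η| ≤ M -/
def P1r (M : ℝ) (f : ℝ → ℝ → ℝ) (x y : ℝ) : ℝ :=
  (1 / (2 * Real.pi)) *
    (∫ η in Set.Icc (-M) M, FyF f x η * Complex.exp (Complex.I * (y : ℂ) * (η : ℂ))).re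

/-- P₂(η₀,M) = P₁(0,M) − P₀(η₀) -/
def P2r (η₀ M : ℝ) (f : ℝ → ℝ → ℝ) (x y : ℝ) : ℝ := P1r M f x y - P0r η₀ f x y

/-- membership in Y: an L² function of one variable whose Fourier transform is
supported in [−η₀,η₀] -/
def MemY (η₀ : ℝ) (f : ℝ → ℝ) : Prop :=
  ∃ g : ℝ → ℂ, Integrable g ∧ MemLp g 2 (volume : Measure ℝ) ∧
    (∀ η : ℝ, η ∉ Set.Icc (-η₀) η₀ → g η = 0) ∧
    ∀ x : ℝ, ((f x : ℝ) : ℂ) = ∫ η : ℝ, g η * Complex.exp (Complex.I * (x : ℂ) * (η : ℂ))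

/-- ψ_{c,L}(x) = 2(√(2c)−2)ψ(x+L) -/
def phiL (ψ : ℝ → ℝ) (c L x : ℝ) : ℝ := 2 * (Real.sqrt (2*c) - 2) * ψ (x + L)

/-- the truncated orthogonality functional F_k[ũ,c̃,γ,L] (cut off at |y| ≤ M) -/
def Ffun (ψ : ℝ → ℝ) (L : ℝ) (u : ℝ → ℝ → ℝ) (ct γ : ℝ → ℝ) (k : Fin 2) (M η : ℝ) : ℂ :=
  ∫ y in Set.Icc (-M) M,
    (∫ x : ℝ,
        (((u x y + soliton 2 x - soliton (2 + ct y) (x - γ y)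
            + phiL ψ (2 + ct y) L (x - γ y) : ℝ) : ℂ)
          * (starRingEnd ℂ) ((gsc k (x - γ y) η (2 + ct y) : ℝ) : ℂ)))
      * Complex.exp (-Complex.I * (y : ℂ) * (η : ℂ))

/-- F_k[ũ,c̃,γ,L] = 0 in L²(−η₀,η₀): the truncated functionals converge to 0
in L²(−η₀,η₀) as M → ∞ -/
def Fvanish (ψ : ℝ → ℝ) (η₀ L : ℝ) (u : ℝ → ℝ → ℝ) (ct γ : ℝ → ℝ) (k : Fin 2) : Prop :=
  Tendsto (fun M : ℝ => ∫ η in Set.Icc (-η₀) η₀, ‖Ffun ψ L u ct γ k M η‖ ^ 2)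
    atTop (𝓝 0)

/-- the exponentially weighted measure e^{2αx} dx dy on ℝ² -/
def muW (α : ℝ) : Measure (ℝ × ℝ) :=
  volume.withDensity fun p : ℝ × ℝ => ENNReal.ofReal (Real.exp (2 * α * p.1))

namespace KPaux

def Q1 (b : ℂ) (w : ℂ) : ℂ :=
  (-1 : ℂ) * (Complex.sinh w ^ 1 * Complex.cosh w ^ 0) + (b) * (Complex.sinh w ^ 0 * Complex.cosh w ^ 1)

def Q2 (b : ℂ) (w : ℂ) : ℂ :=
  (-1 : ℂ) * (Complex.sinh w ^ 0 * Complex.cosh w ^ 2) + (2 : ℂ) * (Complex.sinh w ^ 2 * Complex.cosh w ^ 0) + ((-2) * b) * (Complex.sinh w ^ 1 * Complex.cosh w ^ 1) + (b ^ 2) * (Complex.sinh w ^ 0 * Complex.cosh w ^ 2)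

def Q3 (b : ℂ) (w : ℂ) : ℂ :=
  (5 : ℂ) * (Complex.sinh w ^ 1 * Complex.cosh w ^ 2) + (-6 : ℂ) * (Complex.sinh w ^ 3 * Complex.cosh w ^ 0) + ((-3) * b) * (Complex.sinh w ^ 0 * Complex.cosh w ^ 3) + ((6) * b) * (Complex.sinh w ^ 2 * Complex.cosh w ^ 1) + ((-3) * b ^ 2) * (Complex.sinh w ^ 1 * Complex.cosh w ^ 2) + (b ^ 3) * (Complex.sinh w ^ 0 * Complex.cosh w ^ 3)

def Q4 (b : ℂ) (w : ℂ) : ℂ :=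
  (5 : ℂ) * (Complex.sinh w ^ 0 * Complex.cosh w ^ 4) + (-28 : ℂ) * (Complex.sinh w ^ 2 * Complex.cosh w ^ 2) + (24 : ℂ) * (Complex.sinh w ^ 4 * Complex.cosh w ^ 0) + ((20) * b) * (Complex.sinh w ^ 1 * Complex.cosh w ^ 3) + ((-24) * b) * (Complex.sinh w ^ 3 * Complex.cosh w ^ 1) + ((-6) * b ^ 2) * (Complex.sinh w ^ 0 * Complex.cosh w ^ 4) + ((12) * b ^ 2) * (Complex.sinh w ^ 2 * Complex.cosh w ^ 2) + ((-4) * b ^ 3) * (Complex.sinh w ^ 1 * Complex.cosh w ^ 3) + (b ^ 4) * (Complex.sinh w ^ 0 * Complex.cosh w ^ 4)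

def Q5 (b : ℂ) (w : ℂ) : ℂ :=
  (-61 : ℂ) * (Complex.sinh w ^ 1 * Complex.cosh w ^ 4) + (180 : ℂ) * (Complex.sinh w ^ 3 * Complex.cosh w ^ 2) + (-120 : ℂ) * (Complex.sinh w ^ 5 * Complex.cosh w ^ 0) + ((25) * b) * (Complex.sinh w ^ 0 * Complex.cosh w ^ 5) + ((-140) * b) * (Complex.sinh w ^ 2 * Complex.cosh w ^ 3) + ((120) * b) * (Complex.sinh w ^ 4 * Complex.cosh w ^ 1) + ((50) * b ^ 2) * (Complex.sinh w ^ 1 * Complex.cosh w ^ 4) + ((-60) * b ^ 2) * (Complex.sinh w ^ 3 * Complex.cosh w ^ 2) + ((-10) * b ^ 3) * (Complex.sinh w ^ 0 * Complex.cosh w ^ 5) + ((20) * b ^ 3) * (Complex.sinh w ^ 2 * Complex.cosh w ^ 3) + ((-5) * b ^ 4) * (Complex.sinh w ^ 1 * Complex.cosh w ^ 4) + (b ^ 5) * (Complex.sinh w ^ 0 * Complex.cosh w ^ 5)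

def QD (b : ℂ) (w : ℂ) : ℂ :=
  (-2 : ℂ) * (Complex.sinh w ^ 0 * Complex.cosh w ^ 2) + (4 : ℂ) * (Complex.sinh w ^ 2 * Complex.cosh w ^ 0) + ((-4) * b) * (Complex.sinh w ^ 1 * Complex.cosh w ^ 1) + ((2) * b ^ 2) * (Complex.sinh w ^ 0 * Complex.cosh w ^ 2)

def QP (b : ℂ) (w : ℂ) : ℂ :=
  (14 : ℂ) * (Complex.sinh w ^ 1 * Complex.cosh w ^ 2) + (-20 : ℂ) * (Complex.sinh w ^ 3 * Complex.cosh w ^ 0) + ((-6) * b) * (Complex.sinh w ^ 0 * Complex.cosh w ^ 3) + ((20) * b) * (Complex.sinh w ^ 2 * Complex.cosh w ^ 1) + ((-10) * b ^ 2) * (Complex.sinh w ^ 1 * Complex.cosh w ^ 2) + ((2) * b ^ 3) * (Complex.sinh w ^ 0 * Complex.cosh w ^ 3)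

def G0 (b : ℂ) : ℂ → ℂ := fun w => Complex.exp (b * w) * (1 : ℂ) / Complex.cosh w ^ 1
def G1 (b : ℂ) : ℂ → ℂ := fun w => Complex.exp (b * w) * Q1 b w / Complex.cosh w ^ 2
def G2 (b : ℂ) : ℂ → ℂ := fun w => Complex.exp (b * w) * Q2 b w / Complex.cosh w ^ 3
def G3 (b : ℂ) : ℂ → ℂ := fun w => Complex.exp (b * w) * Q3 b w / Complex.cosh w ^ 4
def G4 (b : ℂ) : ℂ → ℂ := fun w => Complex.exp (b * w) * Q4 b w / Complex.cosh w ^ 5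
def G5 (b : ℂ) : ℂ → ℂ := fun w => Complex.exp (b * w) * Q5 b w / Complex.cosh w ^ 6
def GP (b : ℂ) : ℂ → ℂ := fun w => Complex.exp (b * w) * QD b w / Complex.cosh w ^ 5
def GQ (b : ℂ) : ℂ → ℂ := fun w => Complex.exp (b * w) * QP b w / Complex.cosh w ^ 6


lemma keyD (b : ℂ) (N : ℂ → ℂ) {N' : ℂ} (k : ℕ) {z : ℂ} (hz : Complex.cosh z ≠ 0)
    (hN : HasDerivAt N N' z) :
    HasDerivAt (fun w => Complex.exp (b * w) * N w / Complex.cosh w ^ (k + 1))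
      (Complex.exp (b * z) * ((b * N z + N') * Complex.cosh z
          - ((k : ℂ) + 1) * N z * Complex.sinh z) / Complex.cosh z ^ (k + 2)) z := by
  have h1 : HasDerivAt (fun w : ℂ => Complex.exp (b * w)) (b * Complex.exp (b * z)) z := by
    exact ((Complex.hasDerivAt_exp (b * z)).comp z ((hasDerivAt_id z).const_mul b)).congr_deriv (by simp; ring)
  have h2 : HasDerivAt (fun w : ℂ => Complex.cosh w ^ (k + 1))
      (((k : ℂ) + 1) * Complex.cosh z ^ k * Complex.sinh z) z := by
    exact ((Complex.hasDerivAt_cosh z).pow (k + 1)).congr_deriv (by push_cast; ring)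
  have h3 := (h1.mul hN).div h2 (pow_ne_zero _ hz)
  refine h3.congr_deriv ?_
  simp only [Pi.mul_apply]
  have hck : Complex.cosh z ^ k ≠ 0 := pow_ne_zero _ hz
  field_simp
  ring


lemma step0 (b : ℂ) {z : ℂ} (hz : Complex.cosh z ≠ 0) : HasDerivAt (G0 b) (G1 b z) z := by
  have h := keyD b (fun _ => (1 : ℂ)) 0 hz
      (hasDerivAt_const z 1)
  refine h.congr_deriv ?_
  simp only [G0, G1, Q1]
  push_cast
  ring


lemma step1 (b : ℂ) {z : ℂ} (hz : Complex.cosh z ≠ 0) : HasDerivAt (G1 b) (G2 b z) z := by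
  have h := keyD b (Q1 b) 1 hz
      (((((Complex.hasDerivAt_sinh z).pow 1).mul ((Complex.hasDerivAt_cosh z).pow 0)).const_mul (-1 : ℂ)).add
        ((((Complex.hasDerivAt_sinh z).pow 0).mul ((Complex.hasDerivAt_cosh z).pow 1)).const_mul (b)))
  refine h.congr_deriv ?_
  simp only [G1, G2, Q1, Q2, Pi.pow_apply]
  push_cast
  ring


lemma step2 (b : ℂ) {z : ℂ} (hz : Complex.cosh z ≠ 0) : HasDerivAt (G2 b) (G3 b z) z := by
  have h := keyD b (Q2 b) 2 hz
      (((((((Complex.hasDerivAt_sinh z).pow 0).mul ((Complex.hasDerivAt_cosh z).pow 2)).const_mul (-1 : ℂ)).add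
        ((((Complex.hasDerivAt_sinh z).pow 2).mul ((Complex.hasDerivAt_cosh z).pow 0)).const_mul (2 : ℂ))).add
        ((((Complex.hasDerivAt_sinh z).pow 1).mul ((Complex.hasDerivAt_cosh z).pow 1)).const_mul ((-2) * b))).add
        ((((Complex.hasDerivAt_sinh z).pow 0).mul ((Complex.hasDerivAt_cosh z).pow 2)).const_mul (b ^ 2)))
  refine h.congr_deriv ?_
  simp only [G2, G3, Q2, Q3, Pi.pow_apply]
  push_cast
  ring


lemma step3 (b : ℂ) {z : ℂ} (hz : Complex.cosh z ≠ 0) : HasDerivAt (G3 b) (G4 b z) z := by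
  have h := keyD b (Q3 b) 3 hz
      (((((((((Complex.hasDerivAt_sinh z).pow 1).mul ((Complex.hasDerivAt_cosh z).pow 2)).const_mul (5 : ℂ)).add
        ((((Complex.hasDerivAt_sinh z).pow 3).mul ((Complex.hasDerivAt_cosh z).pow 0)).const_mul (-6 : ℂ))).add
        ((((Complex.hasDerivAt_sinh z).pow 0).mul ((Complex.hasDerivAt_cosh z).pow 3)).const_mul ((-3) * b))).add
        ((((Complex.hasDerivAt_sinh z).pow 2).mul ((Complex.hasDerivAt_cosh z).pow 1)).const_mul ((6) * b))).add
        ((((Complex.hasDerivAt_sinh z).pow 1).mul ((Complex.hasDerivAt_cosh z).pow 2)).const_mul ((-3) * b ^ 2))).add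
        ((((Complex.hasDerivAt_sinh z).pow 0).mul ((Complex.hasDerivAt_cosh z).pow 3)).const_mul (b ^ 3)))
  refine h.congr_deriv ?_
  simp only [G3, G4, Q3, Q4, Pi.pow_apply]
  push_cast
  ring


lemma step4 (b : ℂ) {z : ℂ} (hz : Complex.cosh z ≠ 0) : HasDerivAt (G4 b) (G5 b z) z := by
  have h := keyD b (Q4 b) 4 hz
      ((((((((((((Complex.hasDerivAt_sinh z).pow 0).mul ((Complex.hasDerivAt_cosh z).pow 4)).const_mul (5 : ℂ)).add
        ((((Complex.hasDerivAt_sinh z).pow 2).mul ((Complex.hasDerivAt_cosh z).pow 2)).const_mul (-28 : ℂ))).add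
        ((((Complex.hasDerivAt_sinh z).pow 4).mul ((Complex.hasDerivAt_cosh z).pow 0)).const_mul (24 : ℂ))).add
        ((((Complex.hasDerivAt_sinh z).pow 1).mul ((Complex.hasDerivAt_cosh z).pow 3)).const_mul ((20) * b))).add
        ((((Complex.hasDerivAt_sinh z).pow 3).mul ((Complex.hasDerivAt_cosh z).pow 1)).const_mul ((-24) * b))).add
        ((((Complex.hasDerivAt_sinh z).pow 0).mul ((Complex.hasDerivAt_cosh z).pow 4)).const_mul ((-6) * b ^ 2))).add
        ((((Complex.hasDerivAt_sinh z).pow 2).mul ((Complex.hasDerivAt_cosh z).pow 2)).const_mul ((12) * b ^ 2))).add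
        ((((Complex.hasDerivAt_sinh z).pow 1).mul ((Complex.hasDerivAt_cosh z).pow 3)).const_mul ((-4) * b ^ 3))).add
        ((((Complex.hasDerivAt_sinh z).pow 0).mul ((Complex.hasDerivAt_cosh z).pow 4)).const_mul (b ^ 4)))
  refine h.congr_deriv ?_
  simp only [G4, G5, Q4, Q5, Pi.pow_apply]
  push_cast
  ring


lemma stepP (b : ℂ) {z : ℂ} (hz : Complex.cosh z ≠ 0) : HasDerivAt (GP b) (GQ b z) z := by
  have h := keyD b (QD b) 4 hz
      (((((((Complex.hasDerivAt_sinh z).pow 0).mul ((Complex.hasDerivAt_cosh z).pow 2)).const_mul (-2 : ℂ)).add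
        ((((Complex.hasDerivAt_sinh z).pow 2).mul ((Complex.hasDerivAt_cosh z).pow 0)).const_mul (4 : ℂ))).add
        ((((Complex.hasDerivAt_sinh z).pow 1).mul ((Complex.hasDerivAt_cosh z).pow 1)).const_mul ((-4) * b))).add
        ((((Complex.hasDerivAt_sinh z).pow 0).mul ((Complex.hasDerivAt_cosh z).pow 2)).const_mul ((2) * b ^ 2)))
  refine h.congr_deriv ?_
  simp only [GP, GQ, QD, QP, Pi.pow_apply]
  push_cast
  ring

end KPaux


namespace KPaux

lemma hcr (x : ℝ) : Complex.cosh (x : ℂ) ≠ 0 := by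
  rw [← Complex.ofReal_cosh]
  exact_mod_cast (Real.cosh_pos (x := x)).ne'

lemma dR0 (b : ℂ) : (deriv fun y : ℝ => G0 b ↑y) = fun y : ℝ => G1 b ↑y :=
  funext fun x => ((step0 b (hcr x)).comp_ofReal).deriv
lemma dR1 (b : ℂ) : (deriv fun y : ℝ => G1 b ↑y) = fun y : ℝ => G2 b ↑y :=
  funext fun x => ((step1 b (hcr x)).comp_ofReal).deriv
lemma dR2 (b : ℂ) : (deriv fun y : ℝ => G2 b ↑y) = fun y : ℝ => G3 b ↑y :=
  funext fun x => ((step2 b (hcr x)).comp_ofReal).deriv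
lemma dR3 (b : ℂ) : (deriv fun y : ℝ => G3 b ↑y) = fun y : ℝ => G4 b ↑y :=
  funext fun x => ((step3 b (hcr x)).comp_ofReal).deriv
lemma dR4 (b : ℂ) : (deriv fun y : ℝ => G4 b ↑y) = fun y : ℝ => G5 b ↑y :=
  funext fun x => ((step4 b (hcr x)).comp_ofReal).deriv
lemma dRP (b : ℂ) (x : ℝ) : deriv (fun y : ℝ => GP b ↑y) x = GQ b ↑x :=
  ((stepP b (hcr x)).comp_ofReal).deriv

end KPaux


lemma KPaux.hb2main (η : ℝ) : betam η ^ 2 = 1 - (η : ℂ) * Complex.I := by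
  have h2 : ((1 : ℂ)/2) = ((2 : ℕ) : ℂ)⁻¹ := by norm_num
  simp only [betam, h2]
  exact Complex.cpow_nat_inv_pow _ two_ne_zero

/-- The adjoint resonant eigenfunction equation: k = ∂_x(e^{β(−η)x} sech x)
satisfies k''''−4k''+6(φk')'−3η²k = −4iηβ(−η)k'. -/
theorem stmt6 (η : ℝ) :
    ∀ x : ℝ,
      (fun k : ℝ → ℂ =>
        iteratedDeriv 4 k x - 4 * iteratedDeriv 2 k x
          + 6 * deriv (fun x' => ((2 * ((Real.cosh x')⁻¹) ^ 2 : ℝ) : ℂ) * deriv k x') x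
          - 3 * (η : ℂ) ^ 2 * k x
        = (-(4 * Complex.I * (η : ℂ) * betam η)) * deriv k x)
      (fun x' : ℝ =>
        deriv
          (fun x'' : ℝ => Complex.exp (betam η * (x'' : ℂ)) * (Complex.cosh (x'' : ℂ))⁻¹) x') := by
  intro x
  have hK : ∀ x' : ℝ,
      deriv (fun x'' : ℝ => Complex.exp (betam η * (x'' : ℂ)) * (Complex.cosh (x'' : ℂ))⁻¹) x'
      = KPaux.G1 (betam η) ↑x' := by
    intro x'
    have he : (fun x'' : ℝ => Complex.exp (betam η * (x'' : ℂ)) * (Complex.cosh (x'' : ℂ))⁻¹)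
        = fun y : ℝ => KPaux.G0 (betam η) ↑y := by
      funext y
      simp [KPaux.G0, div_eq_mul_inv]
    rw [he, KPaux.dR0]
  simp only [hK]
  simp only [iteratedDeriv_succ, iteratedDeriv_zero]
  simp only [KPaux.dR1, KPaux.dR2, KPaux.dR3, KPaux.dR4]
  have hphi : (fun x' : ℝ => ((2 * ((Real.cosh x')⁻¹) ^ 2 : ℝ) : ℂ) * KPaux.G2 (betam η) ↑x')
      = fun y : ℝ => KPaux.GP (betam η) ↑y := by
    funext y
    have hcy := KPaux.hcr y
    simp only [KPaux.G2, KPaux.GP, KPaux.Q2, KPaux.QD]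
    push_cast
    field_simp
    ring
  rw [hphi, KPaux.dRP]
  have hb2 := KPaux.hb2main η
  have hpy := Complex.cosh_sq_sub_sinh_sq (x : ℂ)
  have hI := Complex.I_sq
  have hcx := KPaux.hcr x
  simp only [KPaux.G1, KPaux.G2, KPaux.G3, KPaux.G5, KPaux.GQ, KPaux.Q1, KPaux.Q2, KPaux.Q3,
    KPaux.Q5, KPaux.QP]
  field_simp
  linear_combination
    ((57 : ℂ) * Complex.cosh (x:ℂ) ^ 4 * Complex.sinh (x:ℂ) + (-60 : ℂ) * Complex.cosh (x:ℂ) ^ 2 * Complex.sinh (x:ℂ) ^ 3 + (-13 : ℂ) * betam η * Complex.cosh (x:ℂ) ^ 5 + (20 : ℂ) * betam η * Complex.cosh (x:ℂ) ^ 3 * Complex.sinh (x:ℂ) ^ 2 + (-5 : ℂ) * betam η ^ 2 * Complex.cosh (x:ℂ) ^ 4 * Complex.sinh (x:ℂ) + (1 : ℂ) * betam η ^ 3 * Complex.cosh (x:ℂ) ^ 5 + (-60 : ℂ) * Complex.cosh (x:ℂ) ^ 2 * Complex.sinh (x:ℂ) + (12 : ℂ) * betam η * Complex.cosh (x:ℂ)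 ^ 3 + (-3 : ℂ) * Complex.I * Complex.cosh (x:ℂ) ^ 4 * Complex.sinh (x:ℂ) * (η:ℂ) + (3 : ℂ) * betam η * Complex.I * Complex.cosh (x:ℂ) ^ 5 * (η:ℂ)) * hb2
    + ((3 : ℂ) * Complex.cosh (x:ℂ) ^ 4 * Complex.sinh (x:ℂ) * (η:ℂ) ^ 2 + (-3 : ℂ) * betam η * Complex.cosh (x:ℂ) ^ 5 * (η:ℂ) ^ 2) * hI
    + ((-24 : ℂ) * Complex.cosh (x:ℂ) ^ 2 * Complex.sinh (x:ℂ) + (120 : ℂ) * Complex.sinh (x:ℂ) ^ 3 + (24 : ℂ) * betam η * Complex.cosh (x:ℂ) ^ 3 + (-120 : ℂ) * betam η * Complex.cosh (x:ℂ) * Complex.sinh (x:ℂ) ^ 2 + (12 : ℂ) * betam η * Complex.I * Complex.cosh (x:ℂ) ^ 3 * (η:ℂ) + (-60 : ℂ) * Complex.I * Complex.cosh (x:ℂ) ^ 2 * Complex.sinh (x:ℂ) * (η:ℂ)) * hpy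


end
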